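/- arXiv:1606.02685 — 5 statements merged into one kernel-verified Lean document; each statement's English description precedes it below -/
import Mathlib

section
/- Let d ≥ 1, let W be a d×d complex matrix, and let u ∈ ℂ^d and θ ∈ ℝ satisfy W·u = e^{iθ}·u. Define U₀ := |+⟩⟨+| ⊗ 𝟙_d + |−⟩⟨−| ⊗ W, a 2d×2d matrix, where ⊗ is the Kronecker product. Then for every v ∈ ℂ², U₀·(v ⊗ u) = e^{iθ/2} · (R₀(θ)·v) ⊗ u, where v ⊗ u is the Kronecker product of vectors. -/
open Real Complex Matrix Kronecker

noncomputable def Rot (φ θ : ℝ) : Matrix (Fin 2) (Fin 2) ℂ :=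
  !![(Real.cos (θ/2) : ℂ), -Complex.I * Complex.exp (-Complex.I * φ) * Real.sin (θ/2);
     -Complex.I * Complex.exp (Complex.I * φ) * Real.sin (θ/2), (Real.cos (θ/2) : ℂ)]

noncomputable def ketPlus : Fin 2 → ℂ := ![(1 / Real.sqrt 2 : ℝ), (1 / Real.sqrt 2 : ℝ)]
noncomputable def ketMinus : Fin 2 → ℂ := ![(1 / Real.sqrt 2 : ℝ), (-(1 / Real.sqrt 2) : ℝ)]

/-- The rank-one projection `|+⟩⟨+|`. -/
noncomputable def projPlus : Matrix (Fin 2) (Fin 2) ℂ := vecMulVec ketPlus (star ketPlus)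
/-- The rank-one projection `|−⟩⟨−|`. -/
noncomputable def projMinus : Matrix (Fin 2) (Fin 2) ℂ := vecMulVec ketMinus (star ketMinus)

/-- Kronecker product of vectors. -/
def vecKron {d : ℕ} (v : Fin 2 → ℂ) (u : Fin d → ℂ) : Fin 2 × Fin d → ℂ :=
  fun p => v p.1 * u p.2

lemma kron_mulVec {d : ℕ} (A : Matrix (Fin 2) (Fin 2) ℂ) (B : Matrix (Fin d) (Fin d) ℂ)
    (v : Fin 2 → ℂ) (u : Fin d → ℂ) :
    (A ⊗ₖ B).mulVec (vecKron v u) = vecKron (A.mulVec v) (B.mulVec u) := by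
  funext p
  obtain ⟨i, j⟩ := p
  simp only [mulVec, dotProduct, vecKron, Fintype.sum_prod_type, kroneckerMap_apply]
  rw [Finset.sum_mul_sum]
  exact Finset.sum_congr rfl fun k _ => Finset.sum_congr rfl fun l _ => by ring

lemma sqrt_half : ((Real.sqrt 2 : ℝ) : ℂ)⁻¹ * ((Real.sqrt 2 : ℝ) : ℂ)⁻¹ = 2⁻¹ := by
  rw [← mul_inv, ← Complex.ofReal_mul, Real.mul_self_sqrt (by norm_num)]
  norm_num

lemma projPlus_eq : projPlus = !![1/2, 1/2; 1/2, 1/2] := by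
  funext i j
  fin_cases i <;> fin_cases j <;>
    simp [projPlus, ketPlus, vecMulVec_apply, sqrt_half]

lemma projMinus_eq : projMinus = !![1/2, -(1/2); -(1/2), 1/2] := by
  funext i j
  fin_cases i <;> fin_cases j <;>
    simp [projMinus, ketMinus, vecMulVec_apply, sqrt_half]

theorem U0_action (d : ℕ) (hd : 1 ≤ d) (W : Matrix (Fin d) (Fin d) ℂ)
    (u : Fin d → ℂ) (θ : ℝ) (hu : W.mulVec u = Complex.exp (Complex.I * θ) • u) :
    ∀ v : Fin 2 → ℂ,
      (projPlus ⊗ₖ (1 : Matrix (Fin d) (Fin d) ℂ) + projMinus ⊗ₖ W).mulVec (vecKron v u) =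
        Complex.exp (Complex.I * θ / 2) • vecKron ((Rot 0 θ).mulVec v) u := by
  intro v
  rw [add_mulVec, kron_mulVec, kron_mulVec, hu, one_mulVec, projPlus_eq, projMinus_eq]
  have hexp : Complex.exp (Complex.I * θ) =
      Complex.exp (Complex.I * θ / 2) * Complex.exp (Complex.I * θ / 2) := by
    rw [← Complex.exp_add]; ring_nf
  have hhalf : Complex.exp (Complex.I * θ / 2) =
      (Real.cos (θ/2) : ℂ) + (Real.sin (θ/2) : ℂ) * Complex.I := by
    rw [show Complex.I * θ / 2 = ((θ/2 : ℝ) : ℂ) * Complex.I by push_cast; ring,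
      Complex.exp_mul_I]
    simp
  have hsc : (Real.sin (θ/2) : ℂ) * (Real.sin (θ/2) : ℂ)
      + (Real.cos (θ/2) : ℂ) * (Real.cos (θ/2) : ℂ) = 1 := by
    norm_cast
    rw [← Real.sin_sq_add_cos_sq (θ/2)]; ring
  funext p
  obtain ⟨i, j⟩ := p
  set c := (Real.cos (θ/2) : ℂ)
  set s := (Real.sin (θ/2) : ℂ)
  fin_cases i <;>
    · simp only [Pi.add_apply, Pi.smul_apply, vecKron, smul_eq_mul, mulVec, dotProduct,
        Fin.sum_univ_two, Rot]
      simp [-one_div]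
      rw [hexp, hhalf, show ((θ:ℂ)/2) = ((θ/2 : ℝ) : ℂ) by push_cast; ring,
        ← Complex.ofReal_cos, ← Complex.ofReal_sin]
      linear_combination (-(v 0 + v 1) * u j / 2) * hsc
        + ((v 0 + v 1) * u j * s * s / 2) * Complex.I_sq
end

section
/- Let d ≥ 1, let W be a d×d complex matrix, and let u ∈ ℂ^d and θ ∈ ℝ satisfy W·u = e^{iθ}·u. Define U₀ := |+⟩⟨+| ⊗ 𝟙_d + |−⟩⟨−| ⊗ W and, for φ ∈ ℝ, U_φ := (e^{−iφσz/2} ⊗ 𝟙_d) · U₀ · (e^{iφσz/2} ⊗ 𝟙_d), where e^{±iφσz/2} is the diagonal matrix diag(e^{±iφ/2}, e^{∓iφ/2}). Then for every v ∈ ℂ², U_φ·(v ⊗ u) = e^{iθ/2} · (R_φ(θ)·v) ⊗ u. -/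
open Real Complex Matrix Kronecker

/-- `e^{−iφσz/2} = diag(e^{−iφ/2}, e^{iφ/2})`. -/
noncomputable def expZ (φ : ℝ) : Matrix (Fin 2) (Fin 2) ℂ :=
  !![Complex.exp (-Complex.I * φ / 2), 0; 0, Complex.exp (Complex.I * φ / 2)]

lemma key (θ φ : ℝ) (v : Fin 2 → ℂ) :
    expZ φ *ᵥ (projPlus *ᵥ (expZ (-φ) *ᵥ v)) +
      Complex.exp (Complex.I*θ) • (expZ φ *ᵥ (projMinus *ᵥ (expZ (-φ) *ᵥ v))) =
      Complex.exp (Complex.I*θ/2) • ((Rot φ θ) *ᵥ v) := by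
  have hs : ((Real.sqrt 2 : ℝ) : ℂ) * ((Real.sqrt 2 : ℝ) : ℂ) = 2 := by
    rw [← Complex.ofReal_mul, Real.mul_self_sqrt (by norm_num)]; norm_num
  have hcos : Complex.cos ((θ:ℂ)/2)
      = (Complex.exp (Complex.I*θ/2) + (Complex.exp (Complex.I*θ/2))⁻¹) / 2 := by
    rw [Complex.cos, ← Complex.exp_neg]
    ring_nf
  have hsin : Complex.sin ((θ:ℂ)/2)
      = ((Complex.exp (Complex.I*θ/2))⁻¹ - Complex.exp (Complex.I*θ/2)) * Complex.I / 2 := by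
    rw [Complex.sin, ← Complex.exp_neg]
    ring_nf
  have hθ : Complex.exp (Complex.I*θ)
      = Complex.exp (Complex.I*θ/2) * Complex.exp (Complex.I*θ/2) := by
    rw [← Complex.exp_add]; ring_nf
  have hφ : Complex.exp (Complex.I*φ)
      = Complex.exp (Complex.I*φ/2) * Complex.exp (Complex.I*φ/2) := by
    rw [← Complex.exp_add]; ring_nf
  have hnφ2 : Complex.exp (-(Complex.I*(φ:ℂ))/2) = (Complex.exp (Complex.I*φ/2))⁻¹ := by
    rw [← Complex.exp_neg]; ring_nf
  have hnφ : Complex.exp (-(Complex.I*(φ:ℂ)))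
      = (Complex.exp (Complex.I*φ/2))⁻¹ * (Complex.exp (Complex.I*φ/2))⁻¹ := by
    rw [← Complex.exp_neg, ← Complex.exp_add]; ring_nf
  funext i
  fin_cases i <;>
    · simp [expZ, projPlus, projMinus, Rot, ketPlus, ketMinus, vecMulVec, Matrix.mulVec,
        dotProduct, Fin.sum_univ_two, Complex.star_def, Matrix.vecHead, Matrix.vecTail,
        map_inv₀, Complex.conj_ofReal]
      simp only [hcos, hsin, hθ, hφ, hnφ2, hnφ,
        show ((Real.sqrt 2:ℝ):ℂ)⁻¹ * ((Real.sqrt 2:ℝ):ℂ)⁻¹ = (2:ℂ)⁻¹ by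
          rw [← mul_inv, hs]]
      have hE := Complex.exp_ne_zero (Complex.I*θ/2)
      have hF := Complex.exp_ne_zero (Complex.I*(φ:ℂ)/2)
      set E := Complex.exp (Complex.I*θ/2) with hEdef
      set F := Complex.exp (Complex.I*(φ:ℂ)/2) with hFdef
      field_simp
      ring_nf
      simp only [Complex.I_sq]
      ring_nf

lemma vecKron_smul {d : ℕ} (c : ℂ) (v : Fin 2 → ℂ) (u : Fin d → ℂ) :
    vecKron v (c • u) = c • vecKron v u := by
  funext p; simp [vecKron]; ring

lemma vecKron_add_left {d : ℕ} (a b : Fin 2 → ℂ) (u : Fin d → ℂ) :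
    vecKron (a + b) u = vecKron a u + vecKron b u := by
  funext p; simp [vecKron]; ring

lemma vecKron_smul_left {d : ℕ} (c : ℂ) (v : Fin 2 → ℂ) (u : Fin d → ℂ) :
    vecKron (c • v) u = c • vecKron v u := by
  funext p; simp [vecKron]; ring

theorem Uphi_action (d : ℕ) (hd : 1 ≤ d) (W : Matrix (Fin d) (Fin d) ℂ)
    (u : Fin d → ℂ) (θ : ℝ) (hu : W.mulVec u = Complex.exp (Complex.I * θ) • u) (φ : ℝ) :
    ∀ v : Fin 2 → ℂ,
      ((expZ φ ⊗ₖ (1 : Matrix (Fin d) (Fin d) ℂ)) *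
        (projPlus ⊗ₖ (1 : Matrix (Fin d) (Fin d) ℂ) + projMinus ⊗ₖ W) *
        (expZ (-φ) ⊗ₖ (1 : Matrix (Fin d) (Fin d) ℂ))).mulVec (vecKron v u) =
        Complex.exp (Complex.I * θ / 2) • vecKron ((Rot φ θ).mulVec v) u := by
  intro v
  rw [← Matrix.mulVec_mulVec, ← Matrix.mulVec_mulVec, kron_mulVec, Matrix.one_mulVec,
    Matrix.add_mulVec, kron_mulVec, kron_mulVec, Matrix.one_mulVec, hu, vecKron_smul,
    Matrix.mulVec_add, Matrix.mulVec_smul, kron_mulVec, kron_mulVec, Matrix.one_mulVec,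
    ← vecKron_smul_left, ← vecKron_smul_left, ← vecKron_add_left]
  rw [key θ φ v]
end

section
/- Let 0 < ε ≤ 1 and let A₁, B, C₁ : ℝ → ℝ satisfy, for all θ ∈ ℝ, A₁(θ)² + B(θ)² + C₁(θ)² ≤ 1 and A₁(θ)² + C₁(θ)² ≥ ((1−ε)/(1+ε))². Let δ ∈ ℝ satisfy cos δ = A₁(0) and A₁(0) ≥ (1−ε)/(1+ε). Then the function A₂(θ) := A₁(θ)·cos δ + B(θ)·sin δ satisfies |A₂(θ) − A₁(θ)| ≤ 6ε for all θ ∈ ℝ. -/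
open Real

theorem A2_close_to_A1 (ε : ℝ) (hε : 0 < ε) (hε1 : ε ≤ 1)
    (A₁ B C₁ : ℝ → ℝ)
    (hbound : ∀ θ : ℝ, A₁ θ ^ 2 + B θ ^ 2 + C₁ θ ^ 2 ≤ 1)
    (hlower : ∀ θ : ℝ, ((1 - ε) / (1 + ε)) ^ 2 ≤ A₁ θ ^ 2 + C₁ θ ^ 2)
    (δ : ℝ) (hδ : Real.cos δ = A₁ 0) (hA0 : (1 - ε) / (1 + ε) ≤ A₁ 0) :
    ∀ θ : ℝ, |A₁ θ * Real.cos δ + B θ * Real.sin δ - A₁ θ| ≤ 6 * ε := by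
  intro θ
  set c : ℝ := (1 - ε) / (1 + ε) with hc
  have h1 : (0:ℝ) < 1 + ε := by linarith
  have hc0 : 0 ≤ c := div_nonneg (by linarith) (by linarith)
  have hc1 : c ≤ 1 := by
    rw [div_le_one h1]; linarith
  -- cos δ bounds
  have hcosle : Real.cos δ ≤ 1 := Real.cos_le_one δ
  have hcosge : c ≤ Real.cos δ := by rw [hδ]; exact hA0
  have hcK : 1 - c ≤ 2 * ε := by
    have : 1 - 2 * ε ≤ c := by
      rw [hc, le_div_iff₀ h1]; nlinarith
    linarith
  have hKc : 1 - c ^ 2 ≤ 4 * ε := by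
    have hcc : c ^ 2 = (1 - ε)^2 / (1 + ε)^2 := by rw [hc, div_pow]
    have h2 : (0:ℝ) < (1+ε)^2 := by positivity
    have : 1 - 4 * ε ≤ c ^ 2 := by
      rw [hcc, le_div_iff₀ h2]; nlinarith [sq_nonneg ε, mul_nonneg hε.le (sq_nonneg ε)]
    linarith
  -- bounds on pieces
  have hA1 : (A₁ θ) ^ 2 ≤ 1 := by nlinarith [hbound θ, sq_nonneg (B θ), sq_nonneg (C₁ θ)]
  have hB : (B θ) ^ 2 ≤ 1 - c ^ 2 := by nlinarith [hbound θ, hlower θ]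
  have hs : Real.sin δ ^ 2 ≤ 1 - c ^ 2 := by
    have := Real.sin_sq_add_cos_sq δ
    nlinarith
  have hBs : |B θ * Real.sin δ| ≤ 1 - c ^ 2 := by
    have hK0 : 0 ≤ 1 - c ^ 2 := le_trans (sq_nonneg _) hs
    have hsq : (B θ * Real.sin δ) ^ 2 ≤ (1 - c ^ 2) ^ 2 := by nlinarith [sq_nonneg (B θ), sq_nonneg (Real.sin δ)]
    rw [abs_le]
    constructor <;> nlinarith [sq_nonneg (B θ * Real.sin δ + (1 - c^2)), sq_nonneg (B θ * Real.sin δ - (1 - c^2))]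
  have hAc : |A₁ θ * (Real.cos δ - 1)| ≤ 2 * ε := by
    rw [abs_mul]
    have h1' : |A₁ θ| ≤ 1 := by
      rw [abs_le]; constructor <;> nlinarith
    have h2' : |Real.cos δ - 1| ≤ 2 * ε := by
      rw [abs_le]; constructor <;> nlinarith
    calc |A₁ θ| * |Real.cos δ - 1| ≤ 1 * (2 * ε) :=
          mul_le_mul h1' h2' (abs_nonneg _) zero_le_one
      _ = 2 * ε := one_mul _
  calc |A₁ θ * Real.cos δ + B θ * Real.sin δ - A₁ θ|
      = |A₁ θ * (Real.cos δ - 1) + B θ * Real.sin δ| := by ring_nf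
    _ ≤ |A₁ θ * (Real.cos δ - 1)| + |B θ * Real.sin δ| := abs_add_le _ _
    _ ≤ 2 * ε + (1 - c ^ 2) := add_le_add hAc hBs
    _ ≤ 6 * ε := by linarith
end

section
/- (Sum-of-squares completion.) Let n ≥ 0 and let A(θ) = Σ_{k=0}^{n} a_k cos(kθ) and C(θ) = Σ_{k=1}^{n} c_k sin(kθ) for real coefficients a_k, c_k, with A(θ)² + C(θ)² ≤ 1 for all θ ∈ ℝ. Then there exist real coefficients b₀, …, b_n and d₁, …, d_n such that B(θ) := Σ_{k=0}^{n} b_k cos(kθ) and D(θ) := Σ_{k=1}^{n} d_k sin(kθ) satisfy A(θ)² + B(θ)² + C(θ)² + D(θ)² = 1 for all θ ∈ ℝ. -/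
set_option maxHeartbeats 1000000

open Polynomial Set Topology Filter

namespace SOSP


/-- quotient of nonneg by nonneg is nonneg -/
lemma quot_nonneg (m P : Polynomial ℝ) (hm0 : m ≠ 0) (h : ∀ x, 0 ≤ m.eval x * P.eval x)
    (hmnn : ∀ x, 0 ≤ m.eval x) : ∀ x, 0 ≤ P.eval x := by
  intro x
  have hZ : Set.Finite {y : ℝ | m.IsRoot y} := Polynomial.finite_setOf_isRoot hm0
  have hcont : Filter.Tendsto (fun y => P.eval y) (𝓝[≠] x) (nhds (P.eval x)) :=
    (P.continuous.tendsto x).mono_left nhdsWithin_le_nhds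
  refine ge_of_tendsto hcont ?_
  have hclosed : IsClosed ({y : ℝ | m.IsRoot y} \ {x}) := (hZ.subset diff_subset).isClosed
  have hmem : ({y : ℝ | m.IsRoot y} \ {x})ᶜ ∈ nhds x := by
    refine hclosed.isOpen_compl.mem_nhds ?_
    simp
  filter_upwards [nhdsWithin_le_nhds hmem, self_mem_nhdsWithin] with y hy hyx
  have hyZ : ¬ m.IsRoot y := by
    intro hroot
    exact hy ⟨hroot, hyx⟩
  have hmy : 0 < m.eval y := lt_of_le_of_ne (hmnn y) (Ne.symm hyZ)
  nlinarith [h y, hmy]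

/-- a real root of a nonnegative polynomial has multiplicity ≥ 2 -/
lemma sq_dvd (P : Polynomial ℝ) (hnn : ∀ x, 0 ≤ P.eval x) (r : ℝ) (hr : P.eval r = 0) :
    (X - C r) ^ 2 ∣ P := by
  have h1 : (X - C r) ∣ P := dvd_iff_isRoot.2 hr
  obtain ⟨Q, hQ⟩ := h1
  have heval : ∀ y, P.eval y = (y - r) * Q.eval y := by
    intro y; simp [hQ]
  have hge : 0 ≤ Q.eval r := by
    refine ge_of_tendsto (x := 𝓝[>] r)
      ((Q.continuous.tendsto r).mono_left nhdsWithin_le_nhds) ?_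
    filter_upwards [self_mem_nhdsWithin] with y hy
    have : (0:ℝ) < y - r := by simpa using sub_pos.2 (Set.mem_Ioi.mp hy)
    nlinarith [hnn y, heval y]
  have hle : Q.eval r ≤ 0 := by
    refine le_of_tendsto (x := 𝓝[<] r)
      ((Q.continuous.tendsto r).mono_left nhdsWithin_le_nhds) ?_
    filter_upwards [self_mem_nhdsWithin] with y hy
    have : y - r < 0 := by simpa using sub_neg.2 (Set.mem_Iio.mp hy)
    nlinarith [hnn y, heval y]
  have hQr : Q.eval r = 0 := le_antisymm hle hge
  obtain ⟨Q2, hQ2⟩ := dvd_iff_isRoot.2 hQr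
  exact ⟨Q2, by rw [hQ, hQ2]; ring⟩

lemma coeff_sq_top (W : Polynomial ℝ) (d : ℕ) (hW : W.natDegree ≤ d) :
    (W ^ 2).coeff (2 * d) = W.coeff d ^ 2 := by
  rcases lt_or_eq_of_le hW with hlt | heq
  · have h1 : (W ^ 2).natDegree < 2 * d := by
      calc (W ^ 2).natDegree ≤ 2 * W.natDegree := natDegree_pow_le
      _ < 2 * d := by omega
    rw [coeff_eq_zero_of_natDegree_lt h1, coeff_eq_zero_of_natDegree_lt hlt]
    ring
  · have h2 := Polynomial.coeff_mul_degree_add_degree W W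
    rw [sq, two_mul, ← heq, h2, leadingCoeff, heq, sq]

/-- no-cancellation degree bound for sums of two squares -/
lemma deg_sq_le (U V P : Polynomial ℝ) (h : U ^ 2 + V ^ 2 = P) (hP : P ≠ 0) :
    2 * U.natDegree ≤ P.natDegree := by
  rcases eq_or_ne U 0 with hU | hU
  · simp [hU]
  have hUlead : U.coeff U.natDegree ≠ 0 := by
    simpa using mt leadingCoeff_eq_zero.mp hU
  rcases le_total V.natDegree U.natDegree with hle | hle
  · have hcoeff : P.coeff (2 * U.natDegree) = U.coeff U.natDegree ^ 2 + V.coeff U.natDegree ^ 2 := by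
      rw [← h, coeff_add, coeff_sq_top U _ le_rfl, coeff_sq_top V _ hle]
    have hne : P.coeff (2 * U.natDegree) ≠ 0 := by
      rw [hcoeff]
      positivity
    exact le_natDegree_of_ne_zero hne
  · rcases eq_or_ne V 0 with hV | hV
    · rw [hV] at hle
      simp at hle
      omega
    have hVlead : V.coeff V.natDegree ≠ 0 := by
      simpa using mt leadingCoeff_eq_zero.mp hV
    have hcoeff : P.coeff (2 * V.natDegree) = U.coeff V.natDegree ^ 2 + V.coeff V.natDegree ^ 2 := by
      rw [← h, coeff_add, coeff_sq_top U _ hle, coeff_sq_top V _ le_rfl]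
    have hne : P.coeff (2 * V.natDegree) ≠ 0 := by
      rw [hcoeff]
      positivity
    have := le_natDegree_of_ne_zero hne
    omega

/-- even-odd split of a sum over range (2n+1) -/
lemma sum_range_even_odd (n : ℕ) (F : ℕ → ℝ) :
    ∑ i ∈ Finset.range (2 * n + 1), F i =
      (∑ j ∈ Finset.range (n + 1), F (2 * j)) + ∑ j ∈ Finset.range n, F (2 * j + 1) := by
  induction n with
  | zero => simp
  | succ n ih =>
    have h1 : 2 * (n + 1) + 1 = (2 * n + 1) + 1 + 1 := by ring
    rw [h1, Finset.sum_range_succ, Finset.sum_range_succ, ih,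
      Finset.sum_range_succ (f := fun j => F (2 * j)) (n := n + 1),
      Finset.sum_range_succ (f := fun j => F (2 * j + 1)) (n := n)]
    have e1 : 2 * n + 1 + 1 = 2 * (n + 1) := by ring
    rw [e1]
    ring



/-- coprimality of distinct linear factors -/
lemma cop {K : Type*} [Field K] (α β : K) (h : α ≠ β) : IsCoprime (X - C α) (X - C β) := by
  refine ⟨C (β - α)⁻¹, -C (β - α)⁻¹, ?_⟩
  have hne : β - α ≠ 0 := sub_ne_zero.2 h.symm
  have h1 : C (β - α)⁻¹ * (X - C α) + -C (β - α)⁻¹ * (X - C β) = C ((β - α)⁻¹ * (β - α)) := by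
    rw [C_mul, C_sub]
    ring
  rw [h1, inv_mul_cancel₀ hne, C_1]

lemma map_eval_conj (P : Polynomial ℝ) (z : ℂ) :
    (P.map (algebraMap ℝ ℂ)).eval (starRingEnd ℂ z) = starRingEnd ℂ ((P.map (algebraMap ℝ ℂ)).eval z) := by
  rw [eval_map, eval_map, Polynomial.hom_eval₂]
  congr 1
  ext r
  simp

lemma map_eval_real (P : Polynomial ℝ) (r : ℝ) :
    (P.map (algebraMap ℝ ℂ)).eval (r : ℂ) = ((P.eval r : ℝ) : ℂ) := by
  rw [eval_map]
  have : ((r : ℂ)) = algebraMap ℝ ℂ r := by simp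
  rw [this, eval₂_at_apply]
  simp

lemma quad_map (a b : ℝ) (ρ : ℂ) (hre : ρ.re = a) (him : ρ.im = b) :
    (X ^ 2 - C (2 * a) * X + C (a ^ 2 + b ^ 2)).map (algebraMap ℝ ℂ) =
      (X - C ρ) * (X - C (starRingEnd ℂ ρ)) := by
  have h1 : ((2 * a : ℝ) : ℂ) = ρ + starRingEnd ℂ ρ := by
    rw [Complex.add_conj, hre]
  have h2 : ((a ^ 2 + b ^ 2 : ℝ) : ℂ) = ρ * starRingEnd ℂ ρ := by
    rw [Complex.mul_conj, Complex.normSq_apply, hre, him]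
    push_cast
    try ring
  simp only [Polynomial.map_add, Polynomial.map_sub, Polynomial.map_mul, Polynomial.map_pow,
    map_X, map_C]
  rw [show (algebraMap ℝ ℂ) (2 * a) = ((2 * a : ℝ) : ℂ) from rfl,
    show (algebraMap ℝ ℂ) (a ^ 2 + b ^ 2) = ((a ^ 2 + b ^ 2 : ℝ) : ℂ) from rfl, h1, h2,
    C_add, C_mul]
  ring

/-- a quadratic with conjugate complex roots divides -/
lemma quad_dvd (P : Polynomial ℝ) (ρ : ℂ) (hρ : (P.map (algebraMap ℝ ℂ)).eval ρ = 0)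
    (hb : ρ.im ≠ 0) :
    (X ^ 2 - C (2 * ρ.re) * X + C (ρ.re ^ 2 + ρ.im ^ 2)) ∣ P := by
  have hconj : (P.map (algebraMap ℝ ℂ)).eval (starRingEnd ℂ ρ) = 0 := by
    rw [map_eval_conj, hρ, map_zero]
  have hne : ρ ≠ starRingEnd ℂ ρ := by
    intro h
    apply hb
    have := congrArg Complex.im h
    simp at this
    linarith
  have hd1 : (X - C ρ) ∣ P.map (algebraMap ℝ ℂ) := dvd_iff_isRoot.2 hρ
  have hd2 : (X - C (starRingEnd ℂ ρ)) ∣ P.map (algebraMap ℝ ℂ) := dvd_iff_isRoot.2 hconj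
  have hmul : (X - C ρ) * (X - C (starRingEnd ℂ ρ)) ∣ P.map (algebraMap ℝ ℂ) :=
    (cop _ _ hne).mul_dvd hd1 hd2
  rw [← quad_map ρ.re ρ.im ρ rfl rfl] at hmul
  exact (map_dvd_map' (algebraMap ℝ ℂ)).mp hmul

lemma q_natDegree (a b : ℝ) : (X ^ 2 - C (2 * a) * X + C (a ^ 2 + b ^ 2)).natDegree = 2 := by
  have h : (X : Polynomial ℝ) ^ 2 - C (2 * a) * X + C (a ^ 2 + b ^ 2) =
      C 1 * X ^ 2 + C (-(2 * a)) * X + C (a ^ 2 + b ^ 2) := by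
    simp only [map_neg, C_1, one_mul]
    ring
  rw [h, natDegree_quadratic one_ne_zero]


lemma quot_even (m P₁ : Polynomial ℝ) (hm0 : m ≠ 0) (hmev : ∀ x, m.eval (-x) = m.eval x)
    (hPev : ∀ x, (m * P₁).eval (-x) = (m * P₁).eval x) :
    ∀ x, P₁.eval (-x) = P₁.eval x := by
  have hQ : P₁.comp (-X) - P₁ = 0 := by
    apply eq_zero_of_infinite_isRoot
    apply Set.Infinite.mono (s := {x : ℝ | m.IsRoot x}ᶜ)
      (t := {x : ℝ | IsRoot (P₁.comp (-X) - P₁) x})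
    · intro x hx
      simp only [Set.mem_compl_iff, Set.mem_setOf_eq] at hx
      have h1 := hPev x
      simp only [eval_mul] at h1
      rw [hmev x] at h1
      have h2 : P₁.eval (-x) = P₁.eval x := mul_left_cancel₀ hx h1
      simp [IsRoot, eval_comp, h2]
    · exact (Polynomial.finite_setOf_isRoot hm0).infinite_compl
  intro x
  have h2 := congrArg (fun Q => Polynomial.eval x Q) hQ
  have h3 : P₁.eval (-x) - P₁.eval x = 0 := by simpa [eval_comp] using h2
  linarith

/-- THE key decomposition: an even nonneg real polynomial is U²+V² with U even, V odd. -/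
lemma key : ∀ (N : ℕ) (P : Polynomial ℝ), P.natDegree ≤ N → (∀ x, 0 ≤ P.eval x) →
    (∀ x, P.eval (-x) = P.eval x) →
    ∃ U V : Polynomial ℝ, P = U ^ 2 + V ^ 2 ∧ (∀ x, U.eval (-x) = U.eval x) ∧
      (∀ x, V.eval (-x) = -V.eval x) := by
  intro N
  induction N using Nat.strong_induction_on with
  | _ N IH =>
  intro P hdeg hnn hev
  rcases eq_or_ne P 0 with h0 | hP0
  · exact ⟨0, 0, by simp [h0], by simp, by simp⟩
  rcases Nat.eq_zero_or_pos P.natDegree with hd0 | hdpos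
  · have hPC : P = C (P.coeff 0) := eq_C_of_natDegree_eq_zero hd0
    have hc : 0 ≤ P.coeff 0 := by
      have := hnn 0
      rw [hPC] at this
      simpa using this
    refine ⟨C (Real.sqrt (P.coeff 0)), 0, ?_, by simp, by simp⟩
    conv_lhs => rw [hPC]
    rw [← C_pow, Real.sq_sqrt hc]
    simp
  have hcomp : P.comp (-X) = P := by
    have h1 : P.comp (-X) - P = 0 := by
      apply eq_zero_of_infinite_isRoot
      apply Set.Infinite.mono (s := (Set.univ : Set ℝ))
      · intro x _
        simp [IsRoot, eval_comp, hev x]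
      · exact Set.infinite_univ
    linear_combination h1
  have hcompc : (P.map (algebraMap ℝ ℂ)).comp (-X) = P.map (algebraMap ℝ ℂ) := by
    have := congrArg (fun Q => Q.map (algebraMap ℝ ℂ)) hcomp
    simpa [Polynomial.map_comp] using this
  have hevenc : ∀ z : ℂ, (P.map (algebraMap ℝ ℂ)).eval (-z) = (P.map (algebraMap ℝ ℂ)).eval z := by
    intro z
    conv_rhs => rw [← hcompc]
    simp [eval_comp]
  have hdegc : (P.map (algebraMap ℝ ℂ)).degree ≠ 0 := by
    rw [Polynomial.degree_map_eq_of_injective (algebraMap ℝ ℂ).injective,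
      degree_eq_natDegree hP0]
    intro h
    have : P.natDegree = 0 := by exact_mod_cast h
    omega
  obtain ⟨ρ, hρ⟩ := IsAlgClosed.exists_root _ hdegc
  have hρ' : (P.map (algebraMap ℝ ℂ)).eval ρ = 0 := hρ
  have main : ∃ m E O : Polynomial ℝ, m ∣ P ∧ m = E ^ 2 + O ^ 2 ∧
      (∀ x, E.eval (-x) = E.eval x) ∧ (∀ x, O.eval (-x) = -O.eval x) ∧
      m ≠ 0 ∧ 0 < m.natDegree := by
    by_cases hb : ρ.im = 0
    · -- real root
      have hρre : ρ = ((ρ.re : ℝ) : ℂ) := Complex.ext rfl (by simp [hb])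
      have hr : P.eval ρ.re = 0 := by
        have h2 := hρ'
        rw [hρre, map_eval_real] at h2
        exact_mod_cast h2
      by_cases hr0 : ρ.re = 0
      · refine ⟨X ^ 2, 0, X, ?_, by ring, by simp, by simp, ?_, ?_⟩
        · have := sq_dvd P hnn ρ.re hr
          rw [hr0] at this
          simpa using this
        · exact pow_ne_zero 2 X_ne_zero
        · simp
      · have h1 : (X - C ρ.re) ^ 2 ∣ P := sq_dvd P hnn ρ.re hr
        have h2 : (X - C (-ρ.re)) ^ 2 ∣ P := by
          refine sq_dvd P hnn (-ρ.re) ?_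
          rw [hev ρ.re, hr]
        have hcop : IsCoprime ((X - C ρ.re) ^ 2) ((X - C (-ρ.re)) ^ 2) :=
          (cop ρ.re (-ρ.re) (by intro h; apply hr0; linarith)).pow
        refine ⟨(X - C ρ.re) ^ 2 * (X - C (-ρ.re)) ^ 2, X ^ 2 - C ρ.re ^ 2, 0,
          hcop.mul_dvd h1 h2, ?_, ?_, by simp, ?_, ?_⟩
        · simp only [map_neg]
          ring
        · intro x
          simp
          try ring
        · exact mul_ne_zero (pow_ne_zero 2 (X_sub_C_ne_zero ρ.re))
            (pow_ne_zero 2 (X_sub_C_ne_zero (-ρ.re)))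
        · rw [natDegree_mul (pow_ne_zero 2 (X_sub_C_ne_zero ρ.re))
            (pow_ne_zero 2 (X_sub_C_ne_zero (-ρ.re))), natDegree_pow, natDegree_pow,
            natDegree_X_sub_C]
          omega
    · have hq1ne : (X ^ 2 - C (2 * ρ.re) * X + C (ρ.re ^ 2 + ρ.im ^ 2)) ≠ 0 := by
        intro h
        have h2 := q_natDegree ρ.re ρ.im
        rw [h] at h2
        simp at h2
      by_cases ha : ρ.re = 0
      · -- purely imaginary root
        refine ⟨X ^ 2 - C (2 * ρ.re) * X + C (ρ.re ^ 2 + ρ.im ^ 2), C ρ.im, X,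
          quad_dvd P ρ hρ' hb, ?_, by simp, by simp, hq1ne, ?_⟩
        · rw [ha]
          simp only [mul_zero, map_zero, zero_mul, sub_zero, C_add, C_pow]
          norm_num
          try ring
        · rw [q_natDegree]
          omega
      · -- general complex root
        have hd1 : (X ^ 2 - C (2 * ρ.re) * X + C (ρ.re ^ 2 + ρ.im ^ 2)) ∣ P :=
          quad_dvd P ρ hρ' hb
        have hd2 : (X ^ 2 - C (2 * -ρ.re) * X + C (ρ.re ^ 2 + ρ.im ^ 2)) ∣ P := by
          have hroot2 : (P.map (algebraMap ℝ ℂ)).eval (-ρ) = 0 := by rw [hevenc, hρ']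
          have := quad_dvd P (-ρ) hroot2 (by simpa using hb)
          simpa [neg_sq] using this
        have hq2e : (X ^ 2 - C (2 * -ρ.re) * X + C (ρ.re ^ 2 + ρ.im ^ 2)) =
            (X ^ 2 - C (2 * -ρ.re) * X + C ((-ρ.re) ^ 2 + (-ρ.im) ^ 2)) := by
          rw [neg_sq, neg_sq]
        have hq2ne : (X ^ 2 - C (2 * -ρ.re) * X + C (ρ.re ^ 2 + ρ.im ^ 2)) ≠ 0 := by
          intro h
          have h2 := q_natDegree (-ρ.re) (-ρ.im)
          rw [← hq2e, h] at h2
          simp at h2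
        have hρ0 : ρ ≠ 0 := fun h => hb (by simp [h])
        have hc13 : ρ ≠ -ρ := by
          intro h
          apply hρ0
          have h2 : 2 * ρ = 0 := by linear_combination h
          simpa using h2
        have hc14 : ρ ≠ starRingEnd ℂ (-ρ) := by
          intro h
          apply ha
          have := congrArg Complex.re h
          simp at this
          linarith
        have hc23 : starRingEnd ℂ ρ ≠ -ρ := by
          intro h
          apply ha
          have := congrArg Complex.re h
          simp at this
          linarith
        have hc24 : starRingEnd ℂ ρ ≠ starRingEnd ℂ (-ρ) := by
          intro h
          apply hρ0
          have h2 : (-ρ) = ρ := by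
            have := congrArg (starRingEnd ℂ) h
            simpa using this.symm
          have h3 : 2 * ρ = 0 := by linear_combination -h2
          simpa using h3
        have hmap1 := quad_map ρ.re ρ.im ρ rfl rfl
        have hmap2 : (X ^ 2 - C (2 * -ρ.re) * X + C (ρ.re ^ 2 + ρ.im ^ 2)).map (algebraMap ℝ ℂ) =
            (X - C (-ρ)) * (X - C (starRingEnd ℂ (-ρ))) := by
          rw [hq2e]
          exact quad_map (-ρ.re) (-ρ.im) (-ρ) (by simp) (by simp)
        have hcopq : IsCoprime
            ((X ^ 2 - C (2 * ρ.re) * X + C (ρ.re ^ 2 + ρ.im ^ 2)).map (algebraMap ℝ ℂ))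
            ((X ^ 2 - C (2 * -ρ.re) * X + C (ρ.re ^ 2 + ρ.im ^ 2)).map (algebraMap ℝ ℂ)) := by
          rw [hmap1, hmap2]
          have h13 := cop ρ (-ρ) hc13
          have h23 := cop (starRingEnd ℂ ρ) (-ρ) hc23
          have h14 := cop ρ (starRingEnd ℂ (-ρ)) hc14
          have h24 := cop (starRingEnd ℂ ρ) (starRingEnd ℂ (-ρ)) hc24
          exact (h13.mul_left h23).mul_right (h14.mul_left h24)
        have hdvdC : ((X ^ 2 - C (2 * ρ.re) * X + C (ρ.re ^ 2 + ρ.im ^ 2)) *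
            (X ^ 2 - C (2 * -ρ.re) * X + C (ρ.re ^ 2 + ρ.im ^ 2))).map (algebraMap ℝ ℂ) ∣
            P.map (algebraMap ℝ ℂ) := by
          rw [Polynomial.map_mul]
          exact hcopq.mul_dvd ((map_dvd_map' (algebraMap ℝ ℂ)).mpr hd1)
            ((map_dvd_map' (algebraMap ℝ ℂ)).mpr hd2)
        have hdvd : (X ^ 2 - C (2 * ρ.re) * X + C (ρ.re ^ 2 + ρ.im ^ 2)) *
            (X ^ 2 - C (2 * -ρ.re) * X + C (ρ.re ^ 2 + ρ.im ^ 2)) ∣ P :=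
          (map_dvd_map' (algebraMap ℝ ℂ)).mp hdvdC
        refine ⟨_, X ^ 2 - (C ρ.re ^ 2 + C ρ.im ^ 2), 2 * C ρ.im * X, hdvd, ?_, ?_, ?_, ?_, ?_⟩
        · simp only [C_add, C_mul, C_pow, map_neg, map_ofNat]
          ring
        · intro x
          simp
          try ring
        · intro x
          simp
          try ring
        · exact mul_ne_zero hq1ne hq2ne
        · rw [natDegree_mul hq1ne hq2ne, q_natDegree, hq2e, q_natDegree]
          omega
  obtain ⟨m, E, O, hdvd, hmEO, hEev, hOodd, hm0, hmdeg⟩ := main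
  obtain ⟨P₁, hP₁⟩ := hdvd
  have hP₁0 : P₁ ≠ 0 := fun h => hP0 (by rw [hP₁, h, mul_zero])
  have hmnn : ∀ x, 0 ≤ m.eval x := by
    intro x
    rw [hmEO]
    simp only [eval_add, eval_pow]
    positivity
  have hnn1 : ∀ x, 0 ≤ P₁.eval x :=
    quot_nonneg m P₁ hm0 (fun x => by rw [← eval_mul, ← hP₁]; exact hnn x) hmnn
  have hmev : ∀ x, m.eval (-x) = m.eval x := by
    intro x
    rw [hmEO]
    simp only [eval_add, eval_pow]
    rw [hEev, hOodd]
    ring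
  have hev1 : ∀ x, P₁.eval (-x) = P₁.eval x :=
    quot_even m P₁ hm0 hmev (fun x => by rw [← hP₁]; exact hev x)
  have hdegs : m.natDegree + P₁.natDegree = P.natDegree := by
    rw [hP₁, natDegree_mul hm0 hP₁0]
  obtain ⟨U₁, V₁, h1, hU₁, hV₁⟩ := IH P₁.natDegree (by omega) P₁ le_rfl hnn1 hev1
  refine ⟨E * U₁ - O * V₁, E * V₁ + O * U₁, ?_, ?_, ?_⟩
  · rw [hP₁, hmEO, h1]
    ring
  · intro x
    simp only [eval_sub, eval_add, eval_mul, hEev, hOodd, hU₁, hV₁]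
    ring
  · intro x
    simp only [eval_sub, eval_add, eval_mul, hEev, hOodd, hU₁, hV₁]
    ring



lemma coeff_comp_neg (U : Polynomial ℝ) (k : ℕ) :
    (U.comp (-X)).coeff k = (-1) ^ k * U.coeff k := by
  rw [comp_eq_sum_left, coeff_sum]
  have hterm : ∀ e a, (C a * (-X : Polynomial ℝ) ^ e).coeff k
      = if e = k then (-1) ^ k * a else 0 := by
    intro e a
    have h1 : (C a * (-X : Polynomial ℝ) ^ e) = C (a * (-1) ^ e) * X ^ e := by
      rw [neg_pow]
      have h2 : ((-1 : Polynomial ℝ)) ^ e = C ((-1 : ℝ) ^ e) := by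
        rw [map_pow, map_neg, map_one]
      rw [h2, C_mul]
      ring
    rw [h1, C_mul_X_pow_eq_monomial, coeff_monomial]
    split_ifs with h
    · rw [← h]
      ring
    · rfl
  rw [Polynomial.sum_def]
  rw [Finset.sum_congr rfl (fun e _ => hterm e (U.coeff e))]
  have hsum : (∑ e ∈ U.support, if e = k then (-1 : ℝ) ^ k * U.coeff e else 0)
      = if k ∈ U.support then (-1) ^ k * U.coeff k else 0 := by
    rw [Finset.sum_ite_eq' U.support k (fun e => (-1 : ℝ) ^ k * U.coeff e)]
  rw [hsum]
  split_ifs with h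
  · rfl
  · rw [Polynomial.notMem_support_iff.mp h]
    ring

lemma comp_neg_of_even (P : Polynomial ℝ) (h : ∀ x, P.eval (-x) = P.eval x) :
    P.comp (-X) = P := by
  have h1 : P.comp (-X) - P = 0 := by
    apply eq_zero_of_infinite_isRoot
    apply Set.Infinite.mono (s := (Set.univ : Set ℝ))
    · intro x _
      simp [IsRoot, eval_comp, h x]
    · exact Set.infinite_univ
  linear_combination h1

lemma comp_neg_of_odd (P : Polynomial ℝ) (h : ∀ x, P.eval (-x) = -P.eval x) :
    P.comp (-X) = -P := by
  have h1 : P.comp (-X) + P = 0 := by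
    apply eq_zero_of_infinite_isRoot
    apply Set.Infinite.mono (s := (Set.univ : Set ℝ))
    · intro x _
      simp [IsRoot, eval_comp, h x]
    · exact Set.infinite_univ
  linear_combination h1

lemma odd_coeff_zero (U : Polynomial ℝ) (h : ∀ x, U.eval (-x) = U.eval x) (j : ℕ) :
    U.coeff (2 * j + 1) = 0 := by
  have h1 := coeff_comp_neg U (2 * j + 1)
  rw [comp_neg_of_even U h] at h1
  have h2 : ((-1 : ℝ)) ^ (2 * j + 1) = -1 := Odd.neg_one_pow ⟨j, by ring⟩
  rw [h2] at h1
  linarith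

lemma even_coeff_zero (V : Polynomial ℝ) (h : ∀ x, V.eval (-x) = -V.eval x) (j : ℕ) :
    V.coeff (2 * j) = 0 := by
  have h1 := coeff_comp_neg V (2 * j)
  rw [comp_neg_of_odd V h, coeff_neg] at h1
  have h2 : ((-1 : ℝ)) ^ (2 * j) = 1 := Even.neg_one_pow ⟨j, by ring⟩
  rw [h2] at h1
  linarith

lemma sq_zero (U V : Polynomial ℝ) (h : U ^ 2 + V ^ 2 = 0) : U = 0 := by
  apply eq_zero_of_infinite_isRoot
  apply Set.Infinite.mono (s := (Set.univ : Set ℝ))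
  · intro x _
    have h1 := congrArg (fun Q => Polynomial.eval x Q) h
    simp only [eval_add, eval_pow, eval_zero] at h1
    have : U.eval x = 0 := by nlinarith [sq_nonneg (U.eval x), sq_nonneg (V.eval x)]
    simpa [IsRoot]
  · exact Set.infinite_univ

/-! span machinery -/

noncomputable def g (k : ℕ) : ℝ → ℝ := fun θ => Real.cos (k * θ)
noncomputable def h (k : ℕ) : ℝ → ℝ := fun θ => Real.sin ((k + 1) * θ)

lemma cos_mul_mem (m : ℕ) (F : ℝ → ℝ) (hF : F ∈ Submodule.span ℝ (g '' Set.Iic m)) :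
    (fun θ => Real.cos θ * F θ) ∈ Submodule.span ℝ (g '' Set.Iic (m + 1)) := by
  induction hF using Submodule.span_induction with
  | mem x hx =>
    obtain ⟨k, hk, rfl⟩ := hx
    match k with
    | 0 =>
      apply Submodule.subset_span
      refine ⟨1, by simp, ?_⟩
      funext θ
      simp [g]
    | (k + 1) =>
      have hid : (fun θ => Real.cos θ * g (k + 1) θ) =
          (2⁻¹ : ℝ) • g (k + 2) + (2⁻¹ : ℝ) • g k := by
        funext θ
        have e1 : ((k + 2 : ℕ) : ℝ) * θ = ((k + 1 : ℕ) : ℝ) * θ + θ := by push_cast; ring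
        have e2 : ((k : ℕ) : ℝ) * θ = ((k + 1 : ℕ) : ℝ) * θ - θ := by push_cast; ring
        simp only [g, Pi.add_apply, Pi.smul_apply, smul_eq_mul]
        rw [e1, e2, Real.cos_add, Real.cos_sub]
        ring
      rw [hid]
      refine Submodule.add_mem _ (Submodule.smul_mem _ _ (Submodule.subset_span ⟨k + 2, ?_, rfl⟩))
        (Submodule.smul_mem _ _ (Submodule.subset_span ⟨k, ?_, rfl⟩))
      · simpa using Nat.succ_le_succ hk
      · exact le_trans (Nat.le_of_succ_le hk) (Nat.le_succ m)
  | zero =>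
    have : (fun θ => Real.cos θ * (0 : ℝ → ℝ) θ) = 0 := by funext θ; simp
    rw [this]
    exact Submodule.zero_mem _
  | add x y hx hy ihx ihy =>
    have : (fun θ => Real.cos θ * (x + y) θ) =
        (fun θ => Real.cos θ * x θ) + fun θ => Real.cos θ * y θ := by
      funext θ; simp [Pi.add_apply]; ring
    rw [this]
    exact Submodule.add_mem _ ihx ihy
  | smul a x hx ihx =>
    have : (fun θ => Real.cos θ * (a • x) θ) = a • fun θ => Real.cos θ * x θ := by
      funext θ; simp [Pi.smul_apply, smul_eq_mul]; ring
    rw [this]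
    exact Submodule.smul_mem _ _ ihx

lemma cos_pow_mem (m : ℕ) :
    (fun θ => Real.cos θ ^ m) ∈ Submodule.span ℝ (g '' Set.Iic m) := by
  induction m with
  | zero =>
    apply Submodule.subset_span
    refine ⟨0, Set.mem_Iic.mpr (le_refl 0), ?_⟩
    funext θ
    simp [g]
  | succ m ih =>
    have : (fun θ => Real.cos θ ^ (m + 1)) = fun θ => Real.cos θ * Real.cos θ ^ m := by
      funext θ; ring
    rw [this]
    exact cos_mul_mem m _ ih

lemma sin_mul_mem (m : ℕ) (F : ℝ → ℝ) (hF : F ∈ Submodule.span ℝ (h '' Set.Iic m)) :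
    (fun θ => Real.cos θ * F θ) ∈ Submodule.span ℝ (h '' Set.Iic (m + 1)) := by
  induction hF using Submodule.span_induction with
  | mem x hx =>
    obtain ⟨k, hk, rfl⟩ := hx
    match k with
    | 0 =>
      have hid : (fun θ => Real.cos θ * h 0 θ) = (2⁻¹ : ℝ) • h 1 := by
        funext θ
        simp only [h, Pi.smul_apply, smul_eq_mul]
        push_cast
        rw [show (1 + 1 : ℝ) * θ = 2 * θ by ring, Real.sin_two_mul]
        norm_num
        ring
      rw [hid]
      exact Submodule.smul_mem _ _ (Submodule.subset_span ⟨1, by simp, rfl⟩)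
    | (k + 1) =>
      have hid : (fun θ => Real.cos θ * h (k + 1) θ) =
          (2⁻¹ : ℝ) • h (k + 2) + (2⁻¹ : ℝ) • h k := by
        funext θ
        have e1 : ((k + 2 : ℕ) + 1 : ℝ) * θ = ((k + 1 : ℕ) + 1 : ℝ) * θ + θ := by push_cast; ring
        have e2 : ((k : ℕ) + 1 : ℝ) * θ = ((k + 1 : ℕ) + 1 : ℝ) * θ - θ := by push_cast; ring
        simp only [h, Pi.add_apply, Pi.smul_apply, smul_eq_mul]
        rw [e1, e2, Real.sin_add, Real.sin_sub]
        ring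
      rw [hid]
      refine Submodule.add_mem _ (Submodule.smul_mem _ _ (Submodule.subset_span ⟨k + 2, ?_, rfl⟩))
        (Submodule.smul_mem _ _ (Submodule.subset_span ⟨k, ?_, rfl⟩))
      · simpa using Nat.succ_le_succ hk
      · exact le_trans (Nat.le_of_succ_le hk) (Nat.le_succ m)
  | zero =>
    have : (fun θ => Real.cos θ * (0 : ℝ → ℝ) θ) = 0 := by funext θ; simp
    rw [this]
    exact Submodule.zero_mem _
  | add x y hx hy ihx ihy =>
    have : (fun θ => Real.cos θ * (x + y) θ) =
        (fun θ => Real.cos θ * x θ) + fun θ => Real.cos θ * y θ := by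
      funext θ; simp [Pi.add_apply]; ring
    rw [this]
    exact Submodule.add_mem _ ihx ihy
  | smul a x hx ihx =>
    have : (fun θ => Real.cos θ * (a • x) θ) = a • fun θ => Real.cos θ * x θ := by
      funext θ; simp [Pi.smul_apply, smul_eq_mul]; ring
    rw [this]
    exact Submodule.smul_mem _ _ ihx

lemma sin_cos_pow_mem (m : ℕ) :
    (fun θ => Real.sin θ * Real.cos θ ^ m) ∈ Submodule.span ℝ (h '' Set.Iic m) := by
  induction m with
  | zero =>
    apply Submodule.subset_span
    refine ⟨0, Set.mem_Iic.mpr (le_refl 0), ?_⟩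
    funext θ
    simp [h]
  | succ m ih =>
    have : (fun θ => Real.sin θ * Real.cos θ ^ (m + 1)) =
        fun θ => Real.cos θ * (Real.sin θ * Real.cos θ ^ m) := by
      funext θ; ring
    rw [this]
    exact sin_mul_mem m _ ih

lemma span_mono_iic {f : ℕ → ℝ → ℝ} {m m' : ℕ} (hmm : m ≤ m') :
    Submodule.span ℝ (f '' Set.Iic m) ≤ Submodule.span ℝ (f '' Set.Iic m') :=
  Submodule.span_mono (Set.image_mono (Set.Iic_subset_Iic.mpr (by exact_mod_cast hmm)))

lemma g_image_eq (n : ℕ) : g '' Set.Iic n = Set.range (fun k : Fin (n + 1) => g k) := by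
  ext f
  constructor
  · rintro ⟨k, hk, rfl⟩
    exact ⟨⟨k, Nat.lt_succ_of_le hk⟩, rfl⟩
  · rintro ⟨k, rfl⟩
    exact ⟨k, Nat.lt_succ_iff.mp k.2, rfl⟩

lemma h_image_eq (n : ℕ) (hn : 0 < n) : h '' Set.Iic (n - 1) = Set.range (fun k : Fin n => h k) := by
  ext f
  constructor
  · rintro ⟨k, hk, rfl⟩
    exact ⟨⟨k, by simp at hk; omega⟩, rfl⟩
  · rintro ⟨k, rfl⟩
    refine ⟨k, by simp; omega, rfl⟩


lemma T_nd : ∀ k : ℕ, (Polynomial.Chebyshev.T ℝ (k : ℤ)).natDegree ≤ k := by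
  intro k
  induction k using Nat.strong_induction_on with
  | _ k IH =>
  match k with
  | 0 => simp [Polynomial.Chebyshev.T_zero]
  | 1 => simp [Polynomial.Chebyshev.T_one]
  | (k + 2) =>
    have h : ((k + 2 : ℕ) : ℤ) = (k : ℤ) + 2 := by push_cast; ring
    rw [h, Polynomial.Chebyshev.T_add_two]
    refine le_trans (natDegree_sub_le _ _) ?_
    refine max_le ?_ ?_
    · refine le_trans (natDegree_mul_le) ?_
      have h1 : ((k : ℤ) + 1) = ((k + 1 : ℕ) : ℤ) := by push_cast; ring
      have h2 := IH (k + 1) (by omega)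
      rw [h1]
      have h3 : (2 * X : Polynomial ℝ).natDegree ≤ 1 := by
        refine le_trans natDegree_mul_le ?_
        simp
      omega
    · exact le_trans (IH k (by omega)) (by omega)

lemma U_nd : ∀ k : ℕ, (Polynomial.Chebyshev.U ℝ (k : ℤ)).natDegree ≤ k := by
  intro k
  induction k using Nat.strong_induction_on with
  | _ k IH =>
  match k with
  | 0 => simp [Polynomial.Chebyshev.U_zero]
  | 1 =>
    rw [show ((1 : ℕ) : ℤ) = 1 by norm_num, Polynomial.Chebyshev.U_one]
    refine le_trans natDegree_mul_le ?_
    simp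
  | (k + 2) =>
    have h : ((k + 2 : ℕ) : ℤ) = (k : ℤ) + 2 := by push_cast; ring
    rw [h, Polynomial.Chebyshev.U_add_two]
    refine le_trans (natDegree_sub_le _ _) ?_
    refine max_le ?_ ?_
    · refine le_trans (natDegree_mul_le) ?_
      have h1 : ((k : ℤ) + 1) = ((k + 1 : ℕ) : ℤ) := by push_cast; ring
      have h2 := IH (k + 1) (by omega)
      rw [h1]
      have h3 : (2 * X : Polynomial ℝ).natDegree ≤ 1 := by
        refine le_trans natDegree_mul_le ?_
        simp
      omega
    · exact le_trans (IH k (by omega)) (by omega)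


end SOSP


open SOSP Real

theorem sum_of_squares_completion (n : ℕ)
    (a : Fin (n + 1) → ℝ) (c : Fin n → ℝ) (A C : ℝ → ℝ)
    (hA : ∀ θ : ℝ, A θ = ∑ k : Fin (n + 1), a k * Real.cos ((k : ℕ) * θ))
    (hC : ∀ θ : ℝ, C θ = ∑ k : Fin n, c k * Real.sin (((k : ℕ) + 1) * θ))
    (hbound : ∀ θ : ℝ, A θ ^ 2 + C θ ^ 2 ≤ 1) :
    ∃ (b : Fin (n + 1) → ℝ) (d : Fin n → ℝ),
      ∀ θ : ℝ,
        A θ ^ 2 + (∑ k : Fin (n + 1), b k * Real.cos ((k : ℕ) * θ)) ^ 2 +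
          C θ ^ 2 + (∑ k : Fin n, d k * Real.sin (((k : ℕ) + 1) * θ)) ^ 2 = 1 := by
  rcases Nat.eq_zero_or_pos n with hn0 | hn
  · subst hn0
    refine ⟨fun _ => Real.sqrt (1 - (a 0) ^ 2), fun _ => 0, ?_⟩
    intro θ
    have hC0 : C θ = 0 := by rw [hC]; simp
    have hA' : A θ = a 0 := by rw [hA]; simp
    have hb := hbound θ
    rw [hA', hC0] at hb
    have hnn : 0 ≤ 1 - (a 0) ^ 2 := by nlinarith
    rw [hA', hC0]
    have hsum1 : (∑ x : Fin (0 + 1), Real.sqrt (1 - a 0 ^ 2) * Real.cos ((x : ℕ) * θ))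
        = Real.sqrt (1 - a 0 ^ 2) := by simp
    have hsum2 : (∑ x : Fin 0, (0 : ℝ) * Real.sin (((x : ℕ) + 1) * θ)) = 0 := by simp
    rw [hsum1, hsum2]
    nlinarith [Real.sq_sqrt hnn]
  · -- main case
    set pA : Polynomial ℝ :=
      ∑ k : Fin (n + 1), Polynomial.C (a k) * Polynomial.Chebyshev.T ℝ ((k : ℕ) : ℤ) with hpAdef
    set pC : Polynomial ℝ :=
      ∑ k : Fin n, Polynomial.C (c k) * Polynomial.Chebyshev.U ℝ ((k : ℕ) : ℤ) with hpCdef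
    set p : Polynomial ℝ := 1 - pA ^ 2 - (1 - Polynomial.X ^ 2) * pC ^ 2 with hpdef
    have hpA : ∀ θ : ℝ, pA.eval (Real.cos θ) = A θ := by
      intro θ
      rw [hA, hpAdef, Polynomial.eval_finset_sum]
      apply Finset.sum_congr rfl
      intro k _
      rw [Polynomial.eval_mul, Polynomial.eval_C, Polynomial.Chebyshev.T_real_cos]
      norm_num
    have hpC : ∀ θ : ℝ, Real.sin θ * pC.eval (Real.cos θ) = C θ := by
      intro θ
      rw [hC, hpCdef, Polynomial.eval_finset_sum, Finset.mul_sum]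
      apply Finset.sum_congr rfl
      intro k _
      rw [Polynomial.eval_mul, Polynomial.eval_C]
      have := Polynomial.Chebyshev.U_real_cos θ ((k : ℕ) : ℤ)
      have h2 : (((k : ℕ) : ℤ) + 1 : ℝ) * θ = (((k : ℕ) : ℝ) + 1) * θ := by push_cast; ring
      rw [h2] at this
      rw [← this]
      ring
    have hp : ∀ θ : ℝ, p.eval (Real.cos θ) = 1 - A θ ^ 2 - C θ ^ 2 := by
      intro θ
      have hs : Real.sin θ ^ 2 = 1 - Real.cos θ ^ 2 := Real.sin_sq θ
      have h2 : C θ ^ 2 = (1 - Real.cos θ ^ 2) * (pC.eval (Real.cos θ)) ^ 2 := by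
        rw [← hpC θ, mul_pow, hs]
      rw [hpdef]
      simp only [Polynomial.eval_sub, Polynomial.eval_one, Polynomial.eval_mul,
        Polynomial.eval_pow, Polynomial.eval_X]
      rw [← hpA θ, h2]
    have hpAnd : pA.natDegree ≤ n := by
      rw [hpAdef]
      apply Polynomial.natDegree_sum_le_of_forall_le
      intro k _
      refine le_trans Polynomial.natDegree_mul_le ?_
      have := T_nd (k : ℕ)
      have hk : (k : ℕ) ≤ n := Nat.lt_succ_iff.mp k.2
      simp only [Polynomial.natDegree_C]
      omega
    have hpCnd : pC.natDegree ≤ n - 1 := by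
      rw [hpCdef]
      apply Polynomial.natDegree_sum_le_of_forall_le
      intro k _
      refine le_trans Polynomial.natDegree_mul_le ?_
      have := U_nd (k : ℕ)
      have hk : (k : ℕ) < n := k.2
      simp only [Polynomial.natDegree_C]
      omega
    have h1X : ((1 : Polynomial ℝ) - Polynomial.X ^ 2).natDegree ≤ 2 := by
      refine le_trans (Polynomial.natDegree_sub_le _ _) ?_
      simp
    have hpnd : p.natDegree ≤ 2 * n := by
      rw [hpdef]
      refine le_trans (Polynomial.natDegree_sub_le _ _) (max_le ?_ ?_)
      · refine le_trans (Polynomial.natDegree_sub_le _ _) (max_le (by simp) ?_)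
        refine le_trans Polynomial.natDegree_pow_le ?_
        omega
      · refine le_trans Polynomial.natDegree_mul_le ?_
        have := Polynomial.natDegree_pow_le (p := pC) (n := 2)
        omega
    have hpnonneg : ∀ x : ℝ, -1 ≤ x → x ≤ 1 → 0 ≤ p.eval x := by
      intro x h1 h2
      have hx : x = Real.cos (Real.arccos x) := (Real.cos_arccos h1 h2).symm
      rw [hx, hp]
      nlinarith [hbound (Real.arccos x)]
    -- the pulled-back polynomial P(t)
    set P : Polynomial ℝ := ∑ i ∈ Finset.range (2 * n + 1),
      Polynomial.C (p.coeff i) * (1 - Polynomial.X ^ 2) ^ i *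
        (1 + Polynomial.X ^ 2) ^ (2 * n - i) with hPdef
    have hone : ∀ t : ℝ, (0 : ℝ) < 1 + t ^ 2 := fun t => by positivity
    have honene : ∀ t : ℝ, (1 + t ^ 2 : ℝ) ≠ 0 := fun t => ne_of_gt (hone t)
    have hPeval : ∀ t : ℝ, P.eval t
        = (1 + t ^ 2) ^ (2 * n) * p.eval ((1 - t ^ 2) / (1 + t ^ 2)) := by
      intro t
      rw [hPdef, Polynomial.eval_finset_sum,
        Polynomial.eval_eq_sum_range' (lt_of_le_of_lt hpnd (Nat.lt_succ_self _)), Finset.mul_sum]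
      apply Finset.sum_congr rfl
      intro i hi
      have hi' : i ≤ 2 * n := Nat.lt_succ_iff.mp (Finset.mem_range.mp hi)
      simp only [Polynomial.eval_mul, Polynomial.eval_pow, Polynomial.eval_sub,
        Polynomial.eval_add, Polynomial.eval_one, Polynomial.eval_C, Polynomial.eval_X]
      rw [div_pow, show 2 * n = i + (2 * n - i) from by omega, pow_add]
      rw [Nat.add_sub_cancel_left]
      field_simp
    have hPnn : ∀ t : ℝ, 0 ≤ P.eval t := by
      intro t
      rw [hPeval t]
      have hb1 : -1 ≤ (1 - t ^ 2) / (1 + t ^ 2) := by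
        rw [le_div_iff₀ (hone t)]
        nlinarith
      have hb2 : (1 - t ^ 2) / (1 + t ^ 2) ≤ 1 := by
        rw [div_le_iff₀ (hone t)]
        nlinarith
      have := hpnonneg _ hb1 hb2
      positivity
    have hPev : ∀ t : ℝ, P.eval (-t) = P.eval t := by
      intro t
      rw [hPeval t, hPeval (-t), neg_sq]
    obtain ⟨U, V, hUV, hUev, hVodd⟩ := key P.natDegree P le_rfl hPnn hPev
    have hPnd4 : P.natDegree ≤ 4 * n := by
      rw [hPdef]
      apply Polynomial.natDegree_sum_le_of_forall_le
      intro i hi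
      have hi' : i ≤ 2 * n := Nat.lt_succ_iff.mp (Finset.mem_range.mp hi)
      refine le_trans Polynomial.natDegree_mul_le ?_
      have hh1 : (Polynomial.C (p.coeff i) * (1 - Polynomial.X ^ 2) ^ i).natDegree ≤ 2 * i := by
        refine le_trans Polynomial.natDegree_mul_le ?_
        have := Polynomial.natDegree_pow_le (p := (1 - Polynomial.X ^ 2 : Polynomial ℝ)) (n := i)
        have h2 : ((1 : Polynomial ℝ) - Polynomial.X ^ 2).natDegree ≤ 2 := h1X
        simp only [Polynomial.natDegree_C]
        nlinarith
      have hh2 : (((1 : Polynomial ℝ) + Polynomial.X ^ 2) ^ (2 * n - i)).natDegree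
          ≤ 2 * (2 * n - i) := by
        refine le_trans Polynomial.natDegree_pow_le ?_
        have h2 : ((1 : Polynomial ℝ) + Polynomial.X ^ 2).natDegree ≤ 2 := by
          refine le_trans (Polynomial.natDegree_add_le _ _) ?_
          simp
        nlinarith
      omega
    have hUnd : U.natDegree ≤ 2 * n := by
      rcases eq_or_ne P 0 with h0 | h0
      · rw [h0] at hUV
        rw [sq_zero U V hUV.symm]
        simp
      · have := deg_sq_le U V P hUV.symm h0
        omega
    have hVnd : V.natDegree ≤ 2 * n := by
      rcases eq_or_ne P 0 with h0 | h0
      · rw [h0] at hUV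
        have : V ^ 2 + U ^ 2 = 0 := by linear_combination -hUV
        rw [sq_zero V U this]
        simp
      · have : V ^ 2 + U ^ 2 = P := by linear_combination -hUV
        have := deg_sq_le V U P this h0
        omega
    -- the final cos/sin polynomials
    set s : Polynomial ℝ := ∑ j ∈ Finset.range (n + 1),
      Polynomial.C (U.coeff (2 * j) / 2 ^ n) * (1 - Polynomial.X) ^ j *
        (1 + Polynomial.X) ^ (n - j) with hsdef
    set τ : Polynomial ℝ := ∑ j ∈ Finset.range n,
      Polynomial.C (V.coeff (2 * j + 1) / 2 ^ n) * (1 - Polynomial.X) ^ j *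
        (1 + Polynomial.X) ^ (n - 1 - j) with hτdef
    have hIt1 : ∀ t : ℝ, (1 + t ^ 2) ^ n * s.eval ((1 - t ^ 2) / (1 + t ^ 2)) = U.eval t := by
      intro t
      rw [hsdef, Polynomial.eval_finset_sum, Finset.mul_sum,
        Polynomial.eval_eq_sum_range' (show U.natDegree < 2 * n + 1 from by omega) t,
        sum_range_even_odd n (fun i => U.coeff i * t ^ i)]
      have hzero : (∑ j ∈ Finset.range n, U.coeff (2 * j + 1) * t ^ (2 * j + 1)) = 0 :=
        Finset.sum_eq_zero fun j _ => by rw [odd_coeff_zero U hUev j]; ring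
      rw [hzero, add_zero]
      apply Finset.sum_congr rfl
      intro j hj
      have hj' : j ≤ n := Nat.lt_succ_iff.mp (Finset.mem_range.mp hj)
      simp only [Polynomial.eval_mul, Polynomial.eval_pow, Polynomial.eval_sub,
        Polynomial.eval_add, Polynomial.eval_one, Polynomial.eval_C, Polynomial.eval_X]
      have h1x : 1 - (1 - t ^ 2) / (1 + t ^ 2) = 2 * t ^ 2 / (1 + t ^ 2) := by
        field_simp
        ring
      have h2x : 1 + (1 - t ^ 2) / (1 + t ^ 2) = 2 / (1 + t ^ 2) := by
        field_simp
        ring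
      rw [h1x, h2x, div_pow, div_pow]
      rw [show (2 : ℝ) ^ n = 2 ^ j * 2 ^ (n - j) from by
        rw [← pow_add]; congr 1; omega]
      have hsplit : ((1 : ℝ) + t ^ 2) ^ n = (1 + t ^ 2) ^ j * (1 + t ^ 2) ^ (n - j) := by
        rw [← pow_add]; congr 1; omega
      rw [hsplit]
      field_simp
      ring
    have hIt2 : ∀ t : ℝ,
        ((1 + t ^ 2) ^ n * (t * τ.eval ((1 - t ^ 2) / (1 + t ^ 2)))) * 2
          = (1 + t ^ 2) * V.eval t := by
      intro t
      rw [hτdef, Polynomial.eval_finset_sum,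
        Polynomial.eval_eq_sum_range' (show V.natDegree < 2 * n + 1 from by omega) t,
        sum_range_even_odd n (fun i => V.coeff i * t ^ i)]
      have hzero : (∑ j ∈ Finset.range (n + 1), V.coeff (2 * j) * t ^ (2 * j)) = 0 :=
        Finset.sum_eq_zero fun j _ => by rw [even_coeff_zero V hVodd j]; ring
      rw [hzero, zero_add]
      conv_lhs => rw [Finset.mul_sum, Finset.mul_sum, Finset.sum_mul]
      conv_rhs => rw [Finset.mul_sum]
      apply Finset.sum_congr rfl
      intro j hj
      have hj' : j < n := Finset.mem_range.mp hj
      simp only [Polynomial.eval_mul, Polynomial.eval_pow, Polynomial.eval_sub,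
        Polynomial.eval_add, Polynomial.eval_one, Polynomial.eval_C, Polynomial.eval_X]
      have h1x : 1 - (1 - t ^ 2) / (1 + t ^ 2) = 2 * t ^ 2 / (1 + t ^ 2) := by
        field_simp
        ring
      have h2x : 1 + (1 - t ^ 2) / (1 + t ^ 2) = 2 / (1 + t ^ 2) := by
        field_simp
        ring
      rw [h1x, h2x, div_pow, div_pow]
      rw [show (2 : ℝ) ^ n = 2 ^ j * 2 ^ (n - 1 - j) * 2 from by
        rw [← pow_add, ← pow_succ]; congr 1; omega]
      have hsplit : ((1 : ℝ) + t ^ 2) ^ n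
          = (1 + t ^ 2) ^ j * (1 + t ^ 2) ^ (n - 1 - j) * (1 + t ^ 2) := by
        rw [← pow_add, ← pow_succ]; congr 1; omega
      rw [hsplit]
      field_simp
      ring
    have hid : p = s ^ 2 + (1 - Polynomial.X ^ 2) * τ ^ 2 := by
      have hroots : ∀ t : ℝ, p.eval ((1 - t ^ 2) / (1 + t ^ 2))
          = (s ^ 2 + (1 - Polynomial.X ^ 2) * τ ^ 2).eval ((1 - t ^ 2) / (1 + t ^ 2)) := by
        intro t
        have hne := honene t
        have hUVt := congrArg (fun Q => Polynomial.eval t Q) hUV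
        simp only [Polynomial.eval_add, Polynomial.eval_pow] at hUVt
        have hxx : 1 - ((1 - t ^ 2) / (1 + t ^ 2)) ^ 2 = 4 * t ^ 2 / (1 + t ^ 2) ^ 2 := by
          field_simp
          ring
        simp only [Polynomial.eval_add, Polynomial.eval_mul, Polynomial.eval_pow,
          Polynomial.eval_sub, Polynomial.eval_one, Polynomial.eval_X]
        rw [hxx]
        have hV : V.eval t
            = (1 + t ^ 2) ^ n * (t * τ.eval ((1 - t ^ 2) / (1 + t ^ 2))) * 2 / (1 + t ^ 2) := by
          rw [eq_div_iff hne]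
          linarith [hIt2 t]
        have hkey : (1 + t ^ 2) ^ (2 * n) * p.eval ((1 - t ^ 2) / (1 + t ^ 2))
            = (1 + t ^ 2) ^ (2 * n) * ((s.eval ((1 - t ^ 2) / (1 + t ^ 2))) ^ 2
              + 4 * t ^ 2 / (1 + t ^ 2) ^ 2 * (τ.eval ((1 - t ^ 2) / (1 + t ^ 2))) ^ 2) := by
          rw [← hPeval t, hUVt, ← hIt1 t, hV]
          field_simp
          ring
        exact mul_left_cancel₀ (pow_ne_zero _ hne) hkey
      have hQ : p - (s ^ 2 + (1 - Polynomial.X ^ 2) * τ ^ 2) = 0 := by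
        apply Polynomial.eq_zero_of_infinite_isRoot
        have hinj : Set.InjOn (fun t : ℝ => (1 - t ^ 2) / (1 + t ^ 2)) (Set.Ioi 0) := by
          intro t1 h1 t2 h2 heq
          have h1' : (0 : ℝ) < t1 := h1
          have h2' : (0 : ℝ) < t2 := h2
          simp only at heq
          rw [div_eq_div_iff (honene t1) (honene t2)] at heq
          have h3 : t1 ^ 2 = t2 ^ 2 := by nlinarith [heq]
          have h4 : t1 ≤ t2 := by nlinarith [h3]
          have h5 : t2 ≤ t1 := by nlinarith [h3]
          linarith
        apply Set.Infinite.mono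
          (s := (fun t : ℝ => (1 - t ^ 2) / (1 + t ^ 2)) '' Set.Ioi 0)
        · rintro x ⟨t, _, rfl⟩
          simp only [Set.mem_setOf_eq, Polynomial.IsRoot, Polynomial.eval_sub]
          rw [hroots t]
          ring
        · exact Set.Infinite.image hinj (Set.Ioi_infinite 0)
      linear_combination hQ
    -- degree bounds for s and τ
    have hpowle : ∀ (q : Polynomial ℝ) (m : ℕ), q.natDegree ≤ 1 → (q ^ m).natDegree ≤ m := by
      intro q m hq
      refine le_trans Polynomial.natDegree_pow_le ?_
      calc m * q.natDegree ≤ m * 1 := Nat.mul_le_mul_left m hq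
        _ = m := mul_one m
    have h1nd : ((1 : Polynomial ℝ) - Polynomial.X).natDegree ≤ 1 :=
      le_trans (Polynomial.natDegree_sub_le _ _) (by simp)
    have h2nd : ((1 : Polynomial ℝ) + Polynomial.X).natDegree ≤ 1 :=
      le_trans (Polynomial.natDegree_add_le _ _) (by simp)
    have hsnd : s.natDegree ≤ n := by
      rw [hsdef]
      apply Polynomial.natDegree_sum_le_of_forall_le
      intro j hj
      have hj' : j ≤ n := Nat.lt_succ_iff.mp (Finset.mem_range.mp hj)
      refine le_trans Polynomial.natDegree_mul_le ?_
      have t1 := hpowle (1 - Polynomial.X) j h1nd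
      have t2 := hpowle (1 + Polynomial.X) (n - j) h2nd
      have t3 : (Polynomial.C (U.coeff (2 * j) / 2 ^ n) * (1 - Polynomial.X) ^ j).natDegree ≤ j := by
        refine le_trans Polynomial.natDegree_mul_le ?_
        simp only [Polynomial.natDegree_C]
        omega
      omega
    have hτnd : τ.natDegree ≤ n - 1 := by
      rw [hτdef]
      apply Polynomial.natDegree_sum_le_of_forall_le
      intro j hj
      have hj' : j < n := Finset.mem_range.mp hj
      refine le_trans Polynomial.natDegree_mul_le ?_
      have t1 := hpowle (1 - Polynomial.X) j h1nd
      have t2 := hpowle (1 + Polynomial.X) (n - 1 - j) h2nd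
      have t3 : (Polynomial.C (V.coeff (2 * j + 1) / 2 ^ n)
          * (1 - Polynomial.X) ^ j).natDegree ≤ j := by
        refine le_trans Polynomial.natDegree_mul_le ?_
        simp only [Polynomial.natDegree_C]
        omega
      omega
    -- B in the cosine span
    have hBmem : (fun θ => s.eval (Real.cos θ)) ∈ Submodule.span ℝ (g '' Set.Iic n) := by
      have hrepr : (fun θ => s.eval (Real.cos θ))
          = ∑ i ∈ Finset.range (n + 1), s.coeff i • (fun θ => Real.cos θ ^ i) := by
        funext θ
        rw [Polynomial.eval_eq_sum_range' (lt_of_le_of_lt hsnd (Nat.lt_succ_self n)),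
          Finset.sum_apply]
        apply Finset.sum_congr rfl
        intro i _
        simp
      rw [hrepr]
      apply Submodule.sum_mem
      intro i hi
      exact Submodule.smul_mem _ _
        (span_mono_iic (Nat.lt_succ_iff.mp (Finset.mem_range.mp hi)) (cos_pow_mem i))
    obtain ⟨b, hb⟩ : ∃ b : Fin (n + 1) → ℝ,
        ∀ θ, (∑ k : Fin (n + 1), b k * Real.cos ((k : ℕ) * θ)) = s.eval (Real.cos θ) := by
      rw [g_image_eq] at hBmem
      obtain ⟨bb, hbb⟩ := (Submodule.mem_span_range_iff_exists_fun ℝ).mp hBmem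
      refine ⟨bb, fun θ => ?_⟩
      have h2 := congrFun hbb θ
      rw [Finset.sum_apply] at h2
      simpa [g, smul_eq_mul] using h2
    -- D in the sine span
    have hDmem : (fun θ => Real.sin θ * τ.eval (Real.cos θ))
        ∈ Submodule.span ℝ (h '' Set.Iic (n - 1)) := by
      have hrepr : (fun θ => Real.sin θ * τ.eval (Real.cos θ))
          = ∑ i ∈ Finset.range n, τ.coeff i • (fun θ => Real.sin θ * Real.cos θ ^ i) := by
        funext θ
        rw [Polynomial.eval_eq_sum_range' (show τ.natDegree < n from by omega),
          Finset.sum_apply, Finset.mul_sum]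
        apply Finset.sum_congr rfl
        intro i _
        simp
        ring
      rw [hrepr]
      apply Submodule.sum_mem
      intro i hi
      have hi' : i ≤ n - 1 := by
        have := Finset.mem_range.mp hi
        omega
      exact Submodule.smul_mem _ _ (span_mono_iic hi' (sin_cos_pow_mem i))
    obtain ⟨d, hd⟩ : ∃ d : Fin n → ℝ,
        ∀ θ, (∑ k : Fin n, d k * Real.sin (((k : ℕ) + 1) * θ))
          = Real.sin θ * τ.eval (Real.cos θ) := by
      rw [h_image_eq n hn] at hDmem
      obtain ⟨dd, hdd⟩ := (Submodule.mem_span_range_iff_exists_fun ℝ).mp hDmem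
      refine ⟨dd, fun θ => ?_⟩
      have h2 := congrFun hdd θ
      rw [Finset.sum_apply] at h2
      simpa [h, smul_eq_mul] using h2
    refine ⟨b, d, ?_⟩
    intro θ
    rw [hb θ, hd θ]
    have h1 := hp θ
    have h2 := congrArg (fun Q => Polynomial.eval (Real.cos θ) Q) hid
    simp only [Polynomial.eval_add, Polynomial.eval_mul, Polynomial.eval_pow,
      Polynomial.eval_sub, Polynomial.eval_one, Polynomial.eval_X] at h2
    have hs2 : Real.sin θ ^ 2 = 1 - Real.cos θ ^ 2 := Real.sin_sq θ
    linear_combination h1 - h2 + (τ.eval (Real.cos θ)) ^ 2 * hs2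
end

section
/- (Additive query-count bound in the ε-dominated regime.) There exists a constant C > 0 such that for every τ ∈ ℝ with 0 ≤ τ ≤ 1 and every ε ∈ (0, 1/e²), there exists q ∈ ℕ with τ ≤ q − 1, 4·τ^q/(2^q·q!) ≤ ε, and q ≤ C · log(1/ε) / log(log(1/ε)). -/
open Real

-- q^q ≤ q! * exp q
lemma pow_self_le (q : ℕ) : (q : ℝ) ^ q ≤ (q.factorial : ℝ) * Real.exp q := by
  have h := Real.sum_le_exp_of_nonneg (x := (q:ℝ)) (by positivity) (q+1)
  have hterm : (q:ℝ)^q / q.factorial ≤ ∑ i ∈ Finset.range (q+1), (q:ℝ)^i / i.factorial := by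
    exact Finset.single_le_sum (f := fun i => (q:ℝ)^i / (i.factorial : ℝ))
      (fun i _ => by positivity) (Finset.self_mem_range_succ q)
  have hfac : (0:ℝ) < q.factorial := by exact_mod_cast q.factorial_pos
  calc (q:ℝ)^q = ((q:ℝ)^q / q.factorial) * q.factorial := by field_simp
    _ ≤ Real.exp q * q.factorial := by
        apply mul_le_mul_of_nonneg_right (hterm.trans h) hfac.le
    _ = q.factorial * Real.exp q := mul_comm _ _

-- tangent line bound: log x ≤ log c + x/c - 1
lemma log_le_tangent {x c : ℝ} (hx : 0 < x) (hc : 0 < c) :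
    Real.log x ≤ Real.log c + x / c - 1 := by
  have h := Real.log_le_sub_one_of_pos (x := x / c) (by positivity)
  have : Real.log (x / c) = Real.log x - Real.log c := Real.log_div hx.ne' hc.ne'
  linarith [this ▸ h]

theorem additive_query_count :
    ∃ C : ℝ, 0 < C ∧
      ∀ τ : ℝ, 0 ≤ τ → τ ≤ 1 →
        ∀ ε : ℝ, 0 < ε → ε < 1 / Real.exp 2 →
          ∃ q : ℕ, τ ≤ (q : ℝ) - 1 ∧
            4 * τ ^ q / (2 ^ q * (q.factorial : ℝ)) ≤ ε ∧
            (q : ℝ) ≤ C * Real.log (1 / ε) / Real.log (Real.log (1 / ε)) := by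
  refine ⟨5, by norm_num, ?_⟩
  intro τ hτ0 hτ1 ε hε hεe2
  set L := Real.log (1 / ε) with hLdef
  have hεinv : Real.exp 2 < 1 / ε := by
    rw [lt_div_iff₀ hε]
    calc Real.exp 2 * ε < Real.exp 2 * (1 / Real.exp 2) := by
          exact mul_lt_mul_of_pos_left hεe2 (Real.exp_pos 2)
      _ = 1 := by field_simp
  have hL2 : 2 < L := by
    rw [hLdef, ← Real.log_exp 2]
    exact Real.log_lt_log (Real.exp_pos 2) hεinv
  set x := Real.log L with hxdef
  have hx0 : 0 < x := Real.log_pos (by linarith)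
  have hxL : x ≤ L := by
    have := Real.log_le_sub_one_of_pos (by linarith : (0:ℝ) < L)
    linarith
  set q : ℕ := ⌈4 * L / x⌉₊ with hqdef
  have hq_lb : 4 * L / x ≤ (q : ℝ) := Nat.le_ceil _
  have hLx1 : 1 ≤ L / x := (one_le_div hx0).mpr hxL
  have h4Lx : (4:ℝ) ≤ 4 * L / x := by
    calc (4:ℝ) = 4 * 1 := by ring
      _ ≤ 4 * (L / x) := by linarith
      _ = 4 * L / x := by ring
  have hq4 : (4:ℝ) ≤ (q:ℝ) := h4Lx.trans hq_lb
  have hq0 : (0:ℝ) < (q:ℝ) := by linarith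
  -- key logarithmic inequality
  have hlogq : Real.log 4 + x - Real.log x ≤ Real.log q := by
    have h1 : Real.log (4 * L / x) ≤ Real.log q :=
      Real.log_le_log (by positivity) hq_lb
    have h2 : Real.log (4 * L / x) = Real.log 4 + Real.log L - Real.log x := by
      rw [Real.log_div (by positivity) hx0.ne', Real.log_mul (by norm_num) (by linarith)]
    rw [h2] at h1
    linarith
  have l2 := Real.log 2
  have hl2 : (0:ℝ) ≤ Real.log 2 := Real.log_nonneg one_le_two
  have hl3 : (0:ℝ) ≤ Real.log 3 := Real.log_nonneg (by norm_num)
  have hlog4 : Real.log 4 = 2 * Real.log 2 := by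
    rw [show (4:ℝ) = 2^2 by norm_num, Real.log_pow]; push_cast; ring
  have hlog43 : Real.log ((4:ℝ)/3) = 2 * Real.log 2 - Real.log 3 := by
    rw [Real.log_div (by norm_num) (by norm_num), hlog4]
  have htan : Real.log x ≤ Real.log ((4:ℝ)/3) + x / ((4:ℝ)/3) - 1 :=
    log_le_tangent hx0 (by norm_num)
  have key0 : L + Real.log 4 ≤ (4 * L / x) * (Real.log 2 + (Real.log 4 + x - Real.log x) - 1) := by
    rw [div_mul_eq_mul_div, le_div_iff₀ hx0]
    rw [hlog4] at *
    rw [hlog43] at htan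
    nlinarith [mul_le_mul_of_nonneg_left hxL (by positivity : (0:ℝ) ≤ 2 * Real.log 2),
      mul_le_mul_of_nonneg_left htan (by linarith : (0:ℝ) ≤ 4 * L),
      mul_pos (by linarith : (0:ℝ) < L) hx0]
  have hm0 : (0:ℝ) ≤ Real.log 2 + (Real.log 4 + x - Real.log x) - 1 := by
    have := Real.log_le_sub_one_of_pos hx0
    linarith
  have key : L + Real.log 4 ≤ (q:ℝ) * (Real.log 2 + Real.log q - 1) := by
    calc L + Real.log 4 ≤ (4 * L / x) * (Real.log 2 + (Real.log 4 + x - Real.log x) - 1) := key0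
      _ ≤ (q:ℝ) * (Real.log 2 + Real.log q - 1) := by
          apply mul_le_mul hq_lb (by linarith) hm0 (by linarith)
  -- lower bound on 2^q * q!
  have hD0 : (0:ℝ) < 2 ^ q * (q.factorial : ℝ) := by positivity
  have hexp4 : Real.exp (L + Real.log 4) ≤ 2 ^ q * (q.factorial : ℝ) := by
    have e1 : Real.exp ((q:ℝ) * Real.log 2) = (2:ℝ) ^ q := by
      rw [Real.exp_nat_mul, Real.exp_log (by norm_num : (0:ℝ) < 2)]
    have e2 : Real.exp ((q:ℝ) * Real.log q) = (q:ℝ) ^ q := by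
      rw [Real.exp_nat_mul, Real.exp_log hq0]
    have step : Real.exp (L + Real.log 4) ≤
        Real.exp ((q:ℝ) * Real.log 2 + (q:ℝ) * Real.log q - q) := by
      apply Real.exp_le_exp.mpr
      nlinarith [key]
    have step2 : Real.exp ((q:ℝ) * Real.log 2 + (q:ℝ) * Real.log q - q)
        = (2:ℝ)^q * ((q:ℝ)^q / Real.exp q) := by
      rw [Real.exp_sub, Real.exp_add, e1, e2]
      ring
    have step3 : (q:ℝ)^q / Real.exp q ≤ (q.factorial : ℝ) := by
      rw [div_le_iff₀ (Real.exp_pos _)]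
      exact pow_self_le q
    calc Real.exp (L + Real.log 4) ≤ (2:ℝ)^q * ((q:ℝ)^q / Real.exp q) := by rw [← step2]; exact step
      _ ≤ 2 ^ q * (q.factorial : ℝ) := by
          apply mul_le_mul_of_nonneg_left step3 (by positivity)
  have hexpL : Real.exp L = 1 / ε := Real.exp_log (by positivity)
  have h4eD : 4 ≤ ε * (2 ^ q * (q.factorial : ℝ)) := by
    have : Real.exp (L + Real.log 4) = (1/ε) * 4 := by
      rw [Real.exp_add, hexpL, Real.exp_log (by norm_num : (0:ℝ) < 4)]
    rw [this] at hexp4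
    calc (4:ℝ) = ε * ((1/ε) * 4) := by field_simp
      _ ≤ ε * (2 ^ q * (q.factorial : ℝ)) := by
          apply mul_le_mul_of_nonneg_left hexp4 hε.le
  refine ⟨q, by linarith, ?_, ?_⟩
  · rw [div_le_iff₀ hD0]
    have hτq : τ ^ q ≤ 1 := pow_le_one₀ hτ0 hτ1
    nlinarith [h4eD]
  · have hq_ub : (q:ℝ) ≤ 4 * L / x + 1 := by
      have := Nat.ceil_lt_add_one (by positivity : (0:ℝ) ≤ 4 * L / x)
      linarith
    calc (q:ℝ) ≤ 4 * L / x + 1 := hq_ub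
      _ ≤ 4 * L / x + L / x := add_le_add_right hLx1 _
      _ = 5 * L / x := by ring
end
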